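/- Let (f, g) be a pair with property (MB) on the cotensor coalgebra T_H^c(M), with associated product μ. Then the projection π: T_H^c(M) → H onto degree 0 is an algebra morphism if and only if g₀₀ = m_H (the multiplication of H) and g_{pq} = 0 for all (p,q) ≠ (0,0). In that case π is moreover a Hopf algebra morphism. -/

import Mathlib

open TensorProduct

variable (k : Type) [Field k]

/-- A linear map between coalgebras is a coalgebra morphism. -/
def IsCoalgHom {X Y : Type} [AddCommGroup X] [Module k X] [Coalgebra k X]
    [AddCommGroup Y] [Module k Y] [Coalgebra k Y] (φ : X →ₗ[k] Y) : Prop :=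
  Coalgebra.comul ∘ₗ φ = (TensorProduct.map φ φ) ∘ₗ Coalgebra.comul ∧
    Coalgebra.counit ∘ₗ φ = Coalgebra.counit

section MB

variable (H M C : Type)
  [Ring H] [HopfAlgebra k H]
  [AddCommGroup M] [Module k M]
  [AddCommGroup C] [Module k C] [Coalgebra k C]

variable (aL : H ⊗[k] M →ₗ[k] M) (aR : M ⊗[k] H →ₗ[k] M)
  (δLM : M →ₗ[k] H ⊗[k] M) (δRM : M →ₗ[k] M ⊗[k] H)
  (actL : H ⊗[k] C →ₗ[k] C) (actR : C ⊗[k] H →ₗ[k] C)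
  (π : C →ₗ[k] H) (p : C →ₗ[k] M) (ι : H →ₗ[k] C)

/-- The left `H`-coaction on `C = T_H^c(M)`: `(π ⊗ id) ∘ Δ`. -/
noncomputable def deltaLC : C →ₗ[k] H ⊗[k] C :=
  (TensorProduct.map π LinearMap.id) ∘ₗ Coalgebra.comul

/-- The right `H`-coaction on `C = T_H^c(M)`: `(id ⊗ π) ∘ Δ`. -/
noncomputable def deltaRC : C →ₗ[k] C ⊗[k] H :=
  (TensorProduct.map LinearMap.id π) ∘ₗ Coalgebra.comul

/-- The left `H`-coaction on `C ⊗ C` coming from the tensor product of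
bicomodules: `x ⊗ y ↦ Σ x₍₋₁₎ y₍₋₁₎ ⊗ (x₍₀₎ ⊗ y₍₀₎)`. -/
noncomputable def deltaL2 : C ⊗[k] C →ₗ[k] H ⊗[k] (C ⊗[k] C) :=
  (TensorProduct.map (LinearMap.mul' k H) LinearMap.id)
    ∘ₗ (TensorProduct.tensorTensorTensorComm k H C H C).toLinearMap
    ∘ₗ (TensorProduct.map (deltaLC k H C π) (deltaLC k H C π))

/-- The right `H`-coaction on `C ⊗ C`. -/
noncomputable def deltaR2 : C ⊗[k] C →ₗ[k] (C ⊗[k] C) ⊗[k] H :=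
  (TensorProduct.map LinearMap.id (LinearMap.mul' k H))
    ∘ₗ (TensorProduct.tensorTensorTensorComm k C H C H).toLinearMap
    ∘ₗ (TensorProduct.map (deltaRC k H C π) (deltaRC k H C π))

variable (f : C ⊗[k] C →ₗ[k] M) (g : C ⊗[k] C →ₗ[k] H) (μ : C ⊗[k] C →ₗ[k] C)

/-- Property (MB1): `g` is a coalgebra morphism and `f` is an `H`-Hopf
bimodule morphism (for the external `H`-bimodule structure and the
tensor-product `H`-bicomodule structure on `C ⊗ C`) with `f₀₀ = 0`. -/
structure MB1 : Prop where
  g_coalg : IsCoalgHom k g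
  f_left_mod : f ∘ₗ (TensorProduct.map actL LinearMap.id)
      ∘ₗ (TensorProduct.assoc k H C C).symm.toLinearMap
    = aL ∘ₗ (TensorProduct.map LinearMap.id f)
  f_right_mod : f ∘ₗ (TensorProduct.map LinearMap.id actR)
      ∘ₗ (TensorProduct.assoc k C C H).toLinearMap
    = aR ∘ₗ (TensorProduct.map f LinearMap.id)
  f_left_com : δLM ∘ₗ f
    = (TensorProduct.map LinearMap.id f) ∘ₗ deltaL2 k H C π
  f_right_com : δRM ∘ₗ f
    = (TensorProduct.map f LinearMap.id) ∘ₗ deltaR2 k H C π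
  f_00 : f ∘ₗ (TensorProduct.map ι ι) = 0

/-- Property (MB2) — associativity of `g`: summed over the components
`M^{□i} ⊗ M^{□j} ⊗ M^{□k}` it reads `g ∘ (μ ⊗ id) = g ∘ (id ⊗ μ)`, where
`μ = g + Σ_{n ≥ 1} f^{⊗n} Δ^{(n)}` is the coalgebra map with `π ∘ μ = g` and
`p ∘ μ = f`. -/
def MB2 : Prop :=
  g ∘ₗ (TensorProduct.map μ LinearMap.id)
    = g ∘ₗ (TensorProduct.map LinearMap.id μ)
        ∘ₗ (TensorProduct.assoc k C C C).toLinearMap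

/-- Property (MB3) — associativity of `f`. -/
def MB3 : Prop :=
  f ∘ₗ (TensorProduct.map μ LinearMap.id)
    = f ∘ₗ (TensorProduct.map LinearMap.id μ)
        ∘ₗ (TensorProduct.assoc k C C C).toLinearMap

/-- **Graded pairs.**  Let `(f, g)` be a pair with property (MB) on the
cotensor coalgebra `C = T_H^c(M)` (with grading `comp n = M^{□n}`,
`comp 0 = ι(H)`), and `μ` the associated multi-brace product.  Then the
projection `π : T_H^c(M) → H` onto degree 0 is an algebra morphism, i.e.
`π ∘ μ = m_H ∘ (π ⊗ π)`, if and only if the pair is graded: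
`g₀₀ = m_H` and `g_{pq} = 0` for all `(p,q) ≠ (0,0)`.  In that case `π` is
moreover a morphism of Hopf algebras (an algebra morphism which is also a
coalgebra morphism and preserves the unit). -/
theorem projection_algebra_morphism_iff_graded
    (comp : ℕ → Submodule k C)
    (hinternal : DirectSum.IsInternal comp)
    (hcomp0 : LinearMap.range ι = comp 0)
    (hπι : π ∘ₗ ι = LinearMap.id)
    (hπcomp : ∀ n : ℕ, n ≠ 0 → ∀ x ∈ comp n, π x = 0)
    (hπ : IsCoalgHom k π) (hι : IsCoalgHom k ι)
    (hμcoalg : IsCoalgHom k μ)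
    (hπμ : π ∘ₗ μ = g) (hpμ : p ∘ₗ μ = f)
    (hMB1 : MB1 k H M C aL aR δLM δRM actL actR π ι f g)
    (hMB2 : MB2 k H C g μ)
    (hMB3 : MB3 k M C f μ) :
    ((π ∘ₗ μ = (LinearMap.mul' k H) ∘ₗ TensorProduct.map π π) ↔
      ((∀ a b : H, g (ι a ⊗ₜ[k] ι b) = a * b) ∧
        (∀ r s : ℕ, ¬(r = 0 ∧ s = 0) →
          ∀ x ∈ comp r, ∀ y ∈ comp s, g (x ⊗ₜ[k] y) = 0))) ∧
    ((π ∘ₗ μ = (LinearMap.mul' k H) ∘ₗ TensorProduct.map π π) →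
      (IsCoalgHom k π ∧
        π ∘ₗ μ = (LinearMap.mul' k H) ∘ₗ TensorProduct.map π π ∧
        π ∘ₗ ι ∘ₗ Algebra.linearMap k H = Algebra.linearMap k H)) := by
  have hπιx : ∀ a : H, π (ι a) = a := fun a => LinearMap.congr_fun hπι a
  constructor
  · rw [hπμ]
    constructor
    · intro h
      constructor
      · intro a b
        have h' := LinearMap.congr_fun h (ι a ⊗ₜ[k] ι b)
        simpa [hπιx] using h'
      · intro r s hrs x hx y hy
        have h' := LinearMap.congr_fun h (x ⊗ₜ[k] y)
        simp only [LinearMap.comp_apply, TensorProduct.map_tmul,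
          LinearMap.mul'_apply] at h'
        rw [h']
        by_cases hr : r = 0
        · have hs : s ≠ 0 := fun hs0 => hrs ⟨hr, hs0⟩
          rw [hπcomp s hs y hy, mul_zero]
        · rw [hπcomp r hr x hx, zero_mul]
    · rintro ⟨h1, h2⟩
      have key : ∀ x y : C, g (x ⊗ₜ[k] y) = π x * π y := by
        have htop := hinternal.submodule_iSup_eq_top
        intro x
        have hx : x ∈ ⨆ n, comp n := htop ▸ Submodule.mem_top
        refine Submodule.iSup_induction (motive := fun x => ∀ y : C, g (x ⊗ₜ[k] y) = π x * π y)
          comp hx (fun r x hx => ?_) (by simp) (fun x₁ x₂ h1' h2' y => by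
            rw [TensorProduct.add_tmul, map_add, h1' y, h2' y, map_add, add_mul])
        intro y
        have hy : y ∈ ⨆ n, comp n := htop ▸ Submodule.mem_top
        refine Submodule.iSup_induction (motive := fun y => g (x ⊗ₜ[k] y) = π x * π y)
          comp hy (fun s y hy => ?_) (by simp) (fun y₁ y₂ h1' h2' => by
            rw [TensorProduct.tmul_add, map_add, h1', h2', map_add, mul_add])
        by_cases hrs : r = 0 ∧ s = 0
        · obtain ⟨hr, hs⟩ := hrs
          subst hr; subst hs
          obtain ⟨a, rfl⟩ := hcomp0 ▸ hx
          obtain ⟨b, rfl⟩ := hcomp0 ▸ hy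
          rw [h1, hπιx, hπιx]
        · rw [h2 r s hrs x hx y hy]
          by_cases hr : r = 0
          · have hs : s ≠ 0 := fun hs0 => hrs ⟨hr, hs0⟩
            rw [hπcomp s hs y hy, mul_zero]
          · rw [hπcomp r hr x hx, zero_mul]
      apply TensorProduct.ext'
      intro x y
      simpa using key x y
  · intro h
    refine ⟨hπ, h, ?_⟩
    rw [← LinearMap.comp_assoc, hπι, LinearMap.id_comp]

end MB
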